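/- Let X be a finite set with |X| = r where r ≥ 3, and fix x ∈ X. Define e₀ = (r/(r−1))·(E₀ + E₀* − E₀E₀* − E₀*E₀) and e₁ = I − e₀. Then e₀ and e₁ belong to the subconstituent algebra T, they commute with every element of T, they are linearly independent over ℂ, and every element of T that commutes with all elements of T is a ℂ-linear combination of e₀ and e₁; that is, e₀, e₁ form a basis for the center Z(T) of T. -/

import Mathlib

set_option linter.unusedSectionVars false


/-- The all-ones matrix `J` on index set `X`. -/
def Jmat (X : Type*) : Matrix X X ℂ := Matrix.of fun _ _ => 1

/-- The 0-th primitive idempotent `E₀ = r⁻¹ J` of the complete graph `K_r`. -/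
noncomputable def E0 (X : Type*) (r : ℕ) : Matrix X X ℂ := (r : ℂ)⁻¹ • Jmat X

/-- The 0-th dual idempotent `E₀*` with respect to the base vertex `x`. -/
def E0s (X : Type*) [DecidableEq X] (x : X) : Matrix X X ℂ :=
  Matrix.diagonal fun y => if y = x then 1 else 0

/-- The adjacency matrix `A = J - I` of the complete graph `K_r`. -/
def Amat (X : Type*) [DecidableEq X] : Matrix X X ℂ := Jmat X - 1

/-- The dual adjacency matrix `A* = r E₀* - I` of `K_r` with respect to `x`. -/
def AmatStar (X : Type*) [DecidableEq X] (r : ℕ) (x : X) : Matrix X X ℂ :=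
  (r : ℂ) • E0s X x - 1

/-- `e₀ = (r/(r−1))·(E₀ + E₀* − E₀E₀* − E₀*E₀)`. -/
noncomputable def e0 (X : Type*) [Fintype X] [DecidableEq X] (r : ℕ) (x : X) : Matrix X X ℂ :=
  ((r : ℂ) / ((r : ℂ) - 1)) • (E0 X r + E0s X x - E0 X r * E0s X x - E0s X x * E0 X r)

/-- `e₁ = I − e₀`. -/
noncomputable def e1 (X : Type*) [Fintype X] [DecidableEq X] (r : ℕ) (x : X) : Matrix X X ℂ :=
  1 - e0 X r x

section Aux
variable {X : Type*} [Fintype X] [DecidableEq X] {r : ℕ} {x : X}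

lemma hJJ (hcard : Fintype.card X = r) : Jmat X * Jmat X = (r : ℂ) • Jmat X := by
  ext y z
  simp [Jmat, Matrix.mul_apply, Finset.sum_const, hcard]

lemma hDD : E0s X x * E0s X x = E0s X x := by
  ext y z
  rw [E0s, Matrix.mul_diagonal]
  by_cases h : y = z <;> by_cases h2 : z = x <;> simp [Matrix.diagonal_apply, h, h2]

lemma hJDJ : Jmat X * E0s X x * Jmat X = Jmat X := by
  ext y z
  simp [Matrix.mul_apply, Jmat, E0s, Matrix.diagonal_apply, Finset.sum_ite_eq, Finset.sum_ite_eq']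

lemma hDJD : E0s X x * Jmat X * E0s X x = E0s X x := by
  ext y z
  by_cases hy : y = x <;> by_cases hz : z = x <;>
    simp [Matrix.mul_apply, Matrix.mul_diagonal, Matrix.diagonal_mul, Matrix.diagonal_apply,
      Jmat, E0s, hy, hz, eq_comm] <;> grind

lemma e0_eq (h0 : (r:ℂ) ≠ 0) (h1 : (r:ℂ) - 1 ≠ 0) :
    e0 X r x = ((r:ℂ) - 1)⁻¹ • (Jmat X + (r:ℂ) • E0s X x - Jmat X * E0s X x - E0s X x * Jmat X) := by
  rw [e0, E0, Matrix.smul_mul, Matrix.mul_smul]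
  match_scalars <;> field_simp <;> ring

end Aux
set_option linter.unusedSectionVars false

section Aux2
variable {X : Type*} [Fintype X] [DecidableEq X] {r : ℕ} {x : X}

example (hcard : Fintype.card X = r) (hJJ : Jmat X * Jmat X = (r : ℂ) • Jmat X)
    (hDD : E0s X x * E0s X x = E0s X x)
    (hJDJ : Jmat X * E0s X x * Jmat X = Jmat X)
    (hDJD : E0s X x * Jmat X * E0s X x = E0s X x) : True := trivial

lemma hJJD (hcard : Fintype.card X = r) :
    Jmat X * (Jmat X * E0s X x) = (r:ℂ) • (Jmat X * E0s X x) := by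
  rw [← mul_assoc, hJJ hcard, Matrix.smul_mul]

lemma hJDJ' : Jmat X * (E0s X x * Jmat X) = Jmat X := by
  rw [← mul_assoc, hJDJ]

lemma hDJD' : E0s X x * (Jmat X * E0s X x) = E0s X x := by
  rw [← mul_assoc, hDJD]

lemma hDDJ : E0s X x * (E0s X x * Jmat X) = E0s X x * Jmat X := by
  rw [← mul_assoc, hDD]

lemma hJD_D : (Jmat X * E0s X x) * E0s X x = Jmat X * E0s X x := by
  rw [mul_assoc, hDD]

lemma hJD_JD : (Jmat X * E0s X x) * (Jmat X * E0s X x) = Jmat X * E0s X x := by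
  rw [mul_assoc, hDJD']

lemma hJD_DJ : (Jmat X * E0s X x) * (E0s X x * Jmat X) = Jmat X := by
  rw [mul_assoc, hDDJ, hJDJ']

lemma hDJ_J (hcard : Fintype.card X = r) : (E0s X x * Jmat X) * Jmat X = (r:ℂ) • (E0s X x * Jmat X) := by
  rw [mul_assoc, hJJ hcard, Matrix.mul_smul]

lemma hDJ_JD (hcard : Fintype.card X = r) : (E0s X x * Jmat X) * (Jmat X * E0s X x) = (r:ℂ) • E0s X x := by
  rw [mul_assoc, hJJD hcard, Matrix.mul_smul, hDJD']

lemma hDJ_DJ : (E0s X x * Jmat X) * (E0s X x * Jmat X) = E0s X x * Jmat X := by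
  rw [mul_assoc, hJDJ']

lemma e0_comm_J (hcard : Fintype.card X = r) (h0 : (r:ℂ) ≠ 0) (h1 : (r:ℂ) - 1 ≠ 0) :
    e0 X r x * Jmat X = Jmat X * e0 X r x := by
  rw [e0_eq h0 h1, Matrix.smul_mul, Matrix.mul_smul]
  congr 1
  rw [sub_mul, sub_mul, add_mul, mul_sub, mul_sub, mul_add,
    Matrix.smul_mul, Matrix.mul_smul, hJJ hcard, hJDJ, hDJ_J hcard, hJJD hcard, hJDJ']
  module

lemma e0_comm_D (hcard : Fintype.card X = r) (h0 : (r:ℂ) ≠ 0) (h1 : (r:ℂ) - 1 ≠ 0) :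
    e0 X r x * E0s X x = E0s X x * e0 X r x := by
  rw [e0_eq h0 h1, Matrix.smul_mul, Matrix.mul_smul]
  congr 1
  rw [sub_mul, sub_mul, add_mul, mul_sub, mul_sub, mul_add,
    Matrix.smul_mul, Matrix.mul_smul, hDD, hJD_D, hDJD, hDJD', hDDJ]
  module

lemma comm_adjoin {M : Matrix X X ℂ} (hA : M * Amat X = Amat X * M)
    (hAs : M * AmatStar X r x = AmatStar X r x * M) :
    ∀ B ∈ Algebra.adjoin ℂ ({Amat X, AmatStar X r x} : Set (Matrix X X ℂ)), M * B = B * M := by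
  intro B hB
  induction hB using Algebra.adjoin_induction with
  | mem y hy =>
    simp only [Set.mem_insert_iff, Set.mem_singleton_iff] at hy
    rcases hy with rfl | rfl
    · exact hA
    · exact hAs
  | algebraMap c => exact (Algebra.commutes c M).symm
  | add a b _ _ ha hb => rw [mul_add, add_mul, ha, hb]
  | mul a b _ _ ha hb => rw [← mul_assoc, ha, mul_assoc, hb, ← mul_assoc]

lemma Jmem : Jmat X ∈ Algebra.adjoin ℂ ({Amat X, AmatStar X r x} : Set (Matrix X X ℂ)) := by
  have h : Jmat X = Amat X + 1 := by rw [Amat, sub_add_cancel]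
  rw [h]
  exact add_mem (Algebra.subset_adjoin (Set.mem_insert _ _)) (one_mem _)

lemma Dmem (h0 : (r:ℂ) ≠ 0) :
    E0s X x ∈ Algebra.adjoin ℂ ({Amat X, AmatStar X r x} : Set (Matrix X X ℂ)) := by
  have h : E0s X x = (r:ℂ)⁻¹ • (AmatStar X r x + 1) := by
    rw [AmatStar, sub_add_cancel, smul_smul, inv_mul_cancel₀ h0, one_smul]
  rw [h]
  refine Subalgebra.smul_mem _ (add_mem (Algebra.subset_adjoin ?_) (one_mem _)) _
  simp

lemma e0_apply_xx (h0 : (r:ℂ) ≠ 0) (h1 : (r:ℂ) - 1 ≠ 0) : e0 X r x x x = 1 := by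
  rw [e0_eq h0 h1]
  simp only [Matrix.smul_apply, Matrix.sub_apply, Matrix.add_apply, E0s, Matrix.mul_diagonal,
    Matrix.diagonal_mul, Matrix.diagonal_apply, Jmat, Matrix.of_apply, if_pos rfl, smul_eq_mul]
  field_simp
  simp only [if_true]
  ring

lemma e0_apply_yy (h0 : (r:ℂ) ≠ 0) (h1 : (r:ℂ) - 1 ≠ 0) {y : X} (hy : y ≠ x) :
    e0 X r x y y = ((r:ℂ) - 1)⁻¹ := by
  rw [e0_eq h0 h1]
  simp only [Matrix.smul_apply, Matrix.sub_apply, Matrix.add_apply, E0s, Matrix.mul_diagonal,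
    Matrix.diagonal_mul, Matrix.diagonal_apply, Jmat, Matrix.of_apply, if_pos rfl, if_neg hy,
    smul_eq_mul]
  simp

end Aux2

section Main

theorem stmt9 (X : Type*) [Fintype X] [DecidableEq X] (r : ℕ) (hr : 3 ≤ r)
    (hcard : Fintype.card X = r) (x : X) :
    e0 X r x ∈ Algebra.adjoin ℂ ({Amat X, AmatStar X r x} : Set (Matrix X X ℂ)) ∧
    e1 X r x ∈ Algebra.adjoin ℂ ({Amat X, AmatStar X r x} : Set (Matrix X X ℂ)) ∧
    (∀ B ∈ Algebra.adjoin ℂ ({Amat X, AmatStar X r x} : Set (Matrix X X ℂ)),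
      e0 X r x * B = B * e0 X r x) ∧
    (∀ B ∈ Algebra.adjoin ℂ ({Amat X, AmatStar X r x} : Set (Matrix X X ℂ)),
      e1 X r x * B = B * e1 X r x) ∧
    LinearIndependent ℂ ![e0 X r x, e1 X r x] ∧
    (∀ C ∈ Algebra.adjoin ℂ ({Amat X, AmatStar X r x} : Set (Matrix X X ℂ)),
      (∀ B ∈ Algebra.adjoin ℂ ({Amat X, AmatStar X r x} : Set (Matrix X X ℂ)),
        C * B = B * C) →
      ∃ a b : ℂ, C = a • e0 X r x + b • e1 X r x) := by
  have h0 : (r : ℂ) ≠ 0 := Nat.cast_ne_zero.2 (by omega)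
  have h1 : (r : ℂ) - 1 ≠ 0 := by
    rw [sub_ne_zero]
    intro h
    have : r = 1 := by exact_mod_cast h
    omega
  have h2 : (r : ℂ) - 1 ≠ 1 := by
    intro h
    have : (r : ℂ) = 2 := by linear_combination h
    have : r = 2 := by exact_mod_cast this
    omega
  have e0mem : e0 X r x ∈ Algebra.adjoin ℂ ({Amat X, AmatStar X r x} : Set (Matrix X X ℂ)) := by
    rw [e0_eq h0 h1]
    exact Subalgebra.smul_mem _ (sub_mem (sub_mem (add_mem Jmem
      (Subalgebra.smul_mem _ (Dmem h0) _)) (mul_mem Jmem (Dmem h0))) (mul_mem (Dmem h0) Jmem)) _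
  have e1mem : e1 X r x ∈ Algebra.adjoin ℂ ({Amat X, AmatStar X r x} : Set (Matrix X X ℂ)) := by
    rw [e1]
    exact sub_mem (one_mem _) e0mem
  have hcommA : e0 X r x * Amat X = Amat X * e0 X r x := by
    rw [Amat, mul_sub, sub_mul, mul_one, one_mul, e0_comm_J hcard h0 h1]
  have hcommAs : e0 X r x * AmatStar X r x = AmatStar X r x * e0 X r x := by
    rw [AmatStar, mul_sub, sub_mul, mul_one, one_mul, Matrix.mul_smul, Matrix.smul_mul,
      e0_comm_D hcard h0 h1]
  have hc0 := comm_adjoin hcommA hcommAs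
  have hc1 : ∀ B ∈ Algebra.adjoin ℂ ({Amat X, AmatStar X r x} : Set (Matrix X X ℂ)),
      e1 X r x * B = B * e1 X r x := by
    intro B hB
    rw [e1, sub_mul, mul_sub, one_mul, mul_one, hc0 B hB]
  obtain ⟨y0, hy0⟩ := Fintype.exists_ne_of_one_lt_card (by rw [hcard]; omega) x
  have hLI : LinearIndependent ℂ ![e0 X r x, e1 X r x] := by
    refine LinearIndependent.pair_iff.2 fun s t hst => ?_
    have hx := congrFun (congrFun hst x) x
    simp [e1, Matrix.add_apply, Matrix.smul_apply, Matrix.sub_apply, Matrix.one_apply,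
      e0_apply_xx h0 h1] at hx
    have hy := congrFun (congrFun hst y0) y0
    simp [e1, Matrix.add_apply, Matrix.smul_apply, Matrix.sub_apply, Matrix.one_apply,
      e0_apply_yy h0 h1 hy0, hx] at hy
    refine ⟨hx, ?_⟩
    rcases hy with ht | hcon
    · exact ht
    · exfalso
      apply h2
      field_simp at hcon
      linear_combination hcon
  refine ⟨e0mem, e1mem, hc0, hc1, hLI, ?_⟩
  intro C hC hcomm
  classical
  set v : Fin 5 → Matrix X X ℂ :=
    ![1, Jmat X, E0s X x, Jmat X * E0s X x, E0s X x * Jmat X] with hv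
  set S := Submodule.span ℂ (Set.range v) with hS
  have m1 : (1 : Matrix X X ℂ) ∈ S := Submodule.subset_span ⟨0, rfl⟩
  have mJ : Jmat X ∈ S := Submodule.subset_span ⟨1, rfl⟩
  have mD : E0s X x ∈ S := Submodule.subset_span ⟨2, rfl⟩
  have mJD : Jmat X * E0s X x ∈ S := Submodule.subset_span ⟨3, rfl⟩
  have mDJ : E0s X x * Jmat X ∈ S := Submodule.subset_span ⟨4, rfl⟩
  have hvS : ∀ i j : Fin 5, v i * v j ∈ S := by
    intro i j
    fin_cases i <;> fin_cases j <;> simp [hv] <;>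
      first
        | exact m1 | exact mJ | exact mD | exact mJD | exact mDJ
        | (rw [hJJ hcard]; exact Submodule.smul_mem _ _ mJ)
        | (rw [hDD]; exact mD)
        | (rw [hJJD hcard]; exact Submodule.smul_mem _ _ mJD)
        | (rw [hJDJ']; exact mJ)
        | (rw [hDJD']; exact mD)
        | (rw [hDDJ]; exact mDJ)
        | (rw [hJDJ]; exact mJ)
        | (rw [hJD_D]; exact mJD)
        | (rw [hJD_JD]; exact mJD)
        | (rw [hJD_DJ]; exact mJ)
        | (rw [hDJ_J hcard]; exact Submodule.smul_mem _ _ mDJ)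
        | (rw [hDJD]; exact mD)
        | (rw [hDJ_JD hcard]; exact Submodule.smul_mem _ _ mD)
        | (rw [hDJ_DJ]; exact mDJ)
  have hmul1 : ∀ i : Fin 5, ∀ w ∈ S, v i * w ∈ S := by
    intro i w hw
    induction hw using Submodule.span_induction with
    | mem u hu => obtain ⟨j, rfl⟩ := hu; exact hvS i j
    | zero => rw [mul_zero]; exact zero_mem _
    | add a b _ _ ha hb => rw [mul_add]; exact add_mem ha hb
    | smul cc a _ ha => rw [mul_smul_comm]; exact Submodule.smul_mem _ _ ha
  have hmulS : ∀ u ∈ S, ∀ w ∈ S, u * w ∈ S := by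
    intro u hu
    induction hu using Submodule.span_induction with
    | mem u hu => obtain ⟨i, rfl⟩ := hu; exact hmul1 i
    | zero => intro w hw; rw [zero_mul]; exact zero_mem _
    | add a b _ _ ha hb => intro w hw; rw [add_mul]; exact add_mem (ha w hw) (hb w hw)
    | smul cc a _ ha => intro w hw; rw [smul_mul_assoc]; exact Submodule.smul_mem _ _ (ha w hw)
  have hTS : ∀ B ∈ Algebra.adjoin ℂ ({Amat X, AmatStar X r x} : Set (Matrix X X ℂ)), B ∈ S := by
    intro B hB
    induction hB using Algebra.adjoin_induction with
    | mem y hy =>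
      simp only [Set.mem_insert_iff, Set.mem_singleton_iff] at hy
      rcases hy with rfl | rfl
      · rw [Amat]; exact sub_mem mJ m1
      · rw [AmatStar]; exact sub_mem (Submodule.smul_mem _ _ mD) m1
    | algebraMap cc => rw [Algebra.algebraMap_eq_smul_one]; exact Submodule.smul_mem _ _ m1
    | add a b _ _ ha hb => exact add_mem ha hb
    | mul a b _ _ ha hb => exact hmulS _ ha _ hb
  obtain ⟨c, hsum⟩ := (Submodule.mem_span_range_iff_exists_fun ℂ).mp (hTS C hC)
  have hCe : ∀ y z : X, C y z = c 0 * (if y = z then 1 else 0) + c 1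
      + c 2 * (if y = z then (if y = x then 1 else 0) else 0)
      + c 3 * (if z = x then 1 else 0) + c 4 * (if y = x then 1 else 0) := by
    intro y z
    rw [← hsum, Fin.sum_univ_five]
    simp [hv, Matrix.add_apply, Matrix.smul_apply, Matrix.one_apply, Jmat, E0s,
      Matrix.mul_diagonal, Matrix.diagonal_mul, Matrix.diagonal_apply, smul_eq_mul, mul_one,
      mul_ite, mul_zero]
  have hCD := hcomm _ (Dmem h0)
  have hCJ := hcomm _ Jmem
  have h13 : c 1 + c 3 = 0 := by
    have h := congrFun (congrFun hCD y0) x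
    rw [E0s, Matrix.mul_diagonal, Matrix.diagonal_mul] at h
    simp [hy0, hCe y0 x] at h
    linear_combination h
  have h14 : c 1 + c 4 = 0 := by
    have h := congrFun (congrFun hCD x) y0
    rw [E0s, Matrix.mul_diagonal, Matrix.diagonal_mul] at h
    simp [hy0, Ne.symm hy0, hCe x y0] at h
    linear_combination -h
  have h2rel : c 2 = (r : ℂ) * c 1 := by
    have h := congrFun (congrFun hCJ y0) x
    rw [Matrix.mul_apply, Matrix.mul_apply] at h
    simp only [Jmat, Matrix.of_apply, mul_one, one_mul] at h
    simp only [hCe] at h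
    simp [Finset.sum_add_distrib, mul_ite, mul_one, mul_zero, Finset.sum_ite_eq,
      Finset.sum_ite_eq', Finset.sum_const, Finset.card_univ, hcard, hy0,
      nsmul_eq_mul] at h
    linear_combination -h - ((r : ℂ) - 1) * h13 - h14
  have hc3 : c 3 = -c 1 := by linear_combination h13
  have hc4 : c 4 = -c 1 := by linear_combination h14
  refine ⟨c 0 + ((r : ℂ) - 1) * c 1, c 0, ?_⟩
  rw [← hsum, Fin.sum_univ_five]
  simp only [hv, Matrix.cons_val_zero, Matrix.cons_val_one, Matrix.head_cons,
    Matrix.cons_val_two, Matrix.tail_cons, Matrix.cons_val_three, Matrix.cons_val_four,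
    Fin.isValue]
  rw [hc3, hc4, h2rel, e1, e0_eq h0 h1]
  match_scalars <;> field_simp <;> ring
end Main
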